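/- For an odd prime p and r ≥ 1, each level set D_l = {u : 0 ≤ u < p^{r+1}, gcd(u,p)=1, Q_r(u) = l} has exactly p−1 elements, for every l with 0 ≤ l < p^r. -/

import Mathlib

open Finset

/-- The Euler quotient modulo `p^r` of `u`, as a representative in `{0,...,p^r-1}`. -/
def eulerQuotient (p r u : ℕ) : ℕ :=
  ((u ^ (p ^ (r - 1) * (p - 1)) - 1) / p ^ r) % p ^ r

/-- The level set `D_l^{(p^{r+1})} = {u : 0 ≤ u < p^{r+1}, gcd(u,p)=1, Q_r(u)=l}`. -/
def levelSet (p r l : ℕ) : Finset ℕ :=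
  (Finset.range (p ^ (r + 1))).filter (fun u => Nat.Coprime u p ∧ eulerQuotient p r u = l)

/-- The raw Euler quotient (before reduction mod `p^r`). -/
def eq' (p r u : ℕ) : ℕ := (u ^ (p ^ (r - 1) * (p - 1)) - 1) / p ^ r

lemma eulerQuotient_eq (p r u : ℕ) : eulerQuotient p r u = eq' p r u % p ^ r := rfl

section aux
variable {p r : ℕ} (hp : p.Prime) (hr : 1 ≤ r)

include hp hr in
lemma phi_eq : (p ^ r).totient = p ^ (r - 1) * (p - 1) :=
  Nat.totient_prime_pow hp hr

include hp in
lemma upos {u : ℕ} (hu : u.Coprime p) : 0 < u := by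
  rcases Nat.eq_zero_or_pos u with h | h
  · subst h; rw [Nat.coprime_zero_left] at hu; exact absurd hu hp.ne_one
  · exact h

include hp hr in
lemma euler_dvd {u : ℕ} (hu : u.Coprime p) :
    p ^ r ∣ u ^ (p ^ (r - 1) * (p - 1)) - 1 := by
  have h := Nat.ModEq.pow_totient (hu.pow_right r)
  rw [phi_eq hp hr] at h
  have h1 : 1 ≤ u ^ (p ^ (r - 1) * (p - 1)) :=
    Nat.one_le_pow _ _ (upos hp hu)
  exact (Nat.modEq_iff_dvd' h1).mp h.symm

include hp hr in
lemma key_eq {u : ℕ} (hu : u.Coprime p) :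
    u ^ (p ^ (r - 1) * (p - 1)) = 1 + p ^ r * eq' p r u := by
  have hd := euler_dvd hp hr hu
  have h1 : 1 ≤ u ^ (p ^ (r - 1) * (p - 1)) := Nat.one_le_pow _ _ (upos hp hu)
  unfold eq'
  rw [Nat.mul_div_cancel' hd]
  omega

include hp hr in
lemma eq'_mul {u v : ℕ} (hu : u.Coprime p) (hv : v.Coprime p) :
    eq' p r (u * v) = eq' p r u + eq' p r v + p ^ r * (eq' p r u * eq' p r v) := by
  have h : (u * v) ^ (p ^ (r - 1) * (p - 1)) - 1 =
      p ^ r * (eq' p r u + eq' p r v + p ^ r * (eq' p r u * eq' p r v)) := by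
    rw [mul_pow, key_eq hp hr hu, key_eq hp hr hv]
    ring_nf
    omega
  show ((u * v) ^ (p ^ (r - 1) * (p - 1)) - 1) / p ^ r = _
  rw [h, Nat.mul_div_cancel_left _ (pow_pos hp.pos r)]

include hp hr in
lemma eq'_pow {w : ℕ} (hw : w.Coprime p) (k : ℕ) :
    eq' p r (w ^ k) ≡ k * eq' p r w [MOD p ^ r] := by
  induction k with
  | zero =>
    simp [eq', Nat.ModEq.refl]
  | succ k ih =>
    have hwk : (w ^ k).Coprime p := hw.pow_left k
    rw [pow_succ]
    calc eq' p r (w ^ k * w)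
        = eq' p r (w ^ k) + eq' p r w + p ^ r * (eq' p r (w ^ k) * eq' p r w) :=
          eq'_mul hp hr hwk hw
      _ ≡ eq' p r (w ^ k) + eq' p r w + 0 [MOD p ^ r] :=
          (Nat.ModEq.refl _).add ((Nat.modEq_zero_iff_dvd.mpr (dvd_mul_right _ _)))
      _ ≡ k * eq' p r w + eq' p r w + 0 [MOD p ^ r] :=
          ((ih.add_right _).add_right 0)
      _ = (k + 1) * eq' p r w := by ring

include hp hr in
lemma eq'_congr {u v : ℕ} (hu : u.Coprime p) (hv : v.Coprime p)
    (huv : u ≡ v [MOD p ^ (r + 1)]) :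
    eq' p r u ≡ eq' p r v [MOD p ^ r] := by
  set φ := p ^ (r - 1) * (p - 1) with hφ
  have hU : (p : ℤ) ^ r * (eq' p r u : ℤ) = (u : ℤ) ^ φ - 1 := by
    have := key_eq hp hr hu
    have h1 : (u : ℤ) ^ φ = 1 + (p : ℤ) ^ r * (eq' p r u : ℤ) := by
      exact_mod_cast congrArg (Nat.cast : ℕ → ℤ) this
    linarith
  have hV : (p : ℤ) ^ r * (eq' p r v : ℤ) = (v : ℤ) ^ φ - 1 := by
    have := key_eq hp hr hv
    have h1 : (v : ℤ) ^ φ = 1 + (p : ℤ) ^ r * (eq' p r v : ℤ) := by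
      exact_mod_cast congrArg (Nat.cast : ℕ → ℤ) this
    linarith
  have hd : ((p : ℤ) ^ (r + 1)) ∣ (v : ℤ) - u := by
    have := (Nat.modEq_iff_dvd (n := p ^ (r + 1))).mp huv
    exact_mod_cast this
  -- the geometric sum is divisible by p^(r-1)
  set S : ℤ := ∑ i ∈ Finset.range φ, (v : ℤ) ^ i * (u : ℤ) ^ (φ - 1 - i) with hS
  have hSdvd : ((p : ℤ) ^ (r - 1)) ∣ S := by
    haveI : NeZero (p ^ (r - 1)) := ⟨pow_ne_zero _ hp.ne_zero⟩
    rw [show ((p : ℤ)) ^ (r - 1) = ((p ^ (r - 1) : ℕ) : ℤ) by push_cast; ring,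
      ← ZMod.intCast_zmod_eq_zero_iff_dvd]
    push_cast [hS]
    have huv' : ((u : ZMod (p ^ (r - 1))) : ZMod (p ^ (r - 1))) = (v : ZMod (p ^ (r - 1))) := by
      exact (ZMod.natCast_eq_natCast_iff _ _ _).mpr
        (huv.of_dvd (pow_dvd_pow p (by omega)))
    have : ∀ i ∈ Finset.range φ,
        (v : ZMod (p ^ (r - 1))) ^ i * (u : ZMod (p ^ (r - 1))) ^ (φ - 1 - i)
          = (u : ZMod (p ^ (r - 1))) ^ (φ - 1) := by
      intro i hi
      rw [← huv', ← pow_add]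
      congr 1
      have hφ1 : 1 ≤ φ := by
        have := hp.two_le
        have : 1 ≤ p - 1 := by omega
        exact Nat.one_le_iff_ne_zero.mpr (by positivity)
      have := Finset.mem_range.mp hi
      omega
    rw [Finset.sum_congr rfl this, Finset.sum_const, Finset.card_range, nsmul_eq_mul]
    have : ((φ : ℕ) : ZMod (p ^ (r - 1))) = 0 := by
      rw [ZMod.natCast_eq_zero_iff]
      exact Dvd.intro _ rfl
    rw [this, zero_mul]
  have hgeom : S * ((v : ℤ) - u) = (v : ℤ) ^ φ - (u : ℤ) ^ φ := geom_sum₂_mul _ _ _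
  have hbig : ((p : ℤ) ^ (2 * r)) ∣ (v : ℤ) ^ φ - (u : ℤ) ^ φ := by
    rw [← hgeom]
    have : (p : ℤ) ^ (2 * r) = p ^ (r - 1) * p ^ (r + 1) := by
      rw [← pow_add]; congr 1; omega
    rw [this]
    exact mul_dvd_mul hSdvd hd
  have hfin : ((p : ℤ) ^ r) ∣ (eq' p r v : ℤ) - (eq' p r u : ℤ) := by
    have h2 : (p : ℤ) ^ (2 * r) = p ^ r * p ^ r := by rw [← pow_add]; congr 1; omega
    have h3 : (p : ℤ) ^ r * ((eq' p r v : ℤ) - (eq' p r u : ℤ))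
        = (v : ℤ) ^ φ - (u : ℤ) ^ φ := by rw [mul_sub, hU, hV]; ring
    have h4 : (p : ℤ) ^ r * (p : ℤ) ^ r ∣ (p : ℤ) ^ r * ((eq' p r v : ℤ) - (eq' p r u : ℤ)) := by
      rw [h3, ← h2]; exact hbig
    exact (mul_dvd_mul_iff_left (a := (p : ℤ) ^ r)
      (pow_ne_zero _ (by exact_mod_cast hp.ne_zero))).mp h4
  exact (Nat.modEq_iff_dvd (n := p ^ r)).mpr (by exact_mod_cast hfin)

include hp hr in
lemma not_dvd_eq'_w (hodd : Odd p) : ¬ p ∣ eq' p r (1 + p) := by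
  haveI : Fact p.Prime := ⟨hp⟩
  set φ := p ^ (r - 1) * (p - 1) with hφ
  have hwcop : (1 + p).Coprime p := by simp [Nat.coprime_add_self_left]
  have hφ0 : φ ≠ 0 := by
    have := hp.two_le
    have h1 : 1 ≤ p - 1 := by omega
    positivity
  have hple := hp.two_le
  have hx : ¬ p ∣ 1 + p := by
    intro h
    have h1 : p ∣ 1 := (Nat.dvd_add_right (dvd_refl p)).mp (by rwa [Nat.add_comm] at h)
    have := Nat.le_of_dvd one_pos h1
    omega
  have hM0 : (1 + p) ^ φ - 1 ≠ 0 := by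
    have : 1 < (1 + p) ^ φ := Nat.one_lt_pow hφ0 (by omega)
    omega
  have hval : padicValNat p ((1 + p) ^ φ - 1) = r := by
    have h1 : padicValNat p ((1 + p) ^ φ - 1 ^ φ)
        = padicValNat p ((1 + p) - 1) + padicValNat p φ :=
      padicValNat.pow_sub_pow hodd (by omega) (by simp) hx hφ0
    have h2 : padicValNat p φ = r - 1 := by
      rw [hφ, padicValNat.mul (pow_ne_zero _ hp.ne_zero) (by omega),
        padicValNat.prime_pow, padicValNat.eq_zero_of_not_dvd (by
          intro h
          have := Nat.le_of_dvd (by omega) h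
          omega), Nat.add_zero]
    simp only [one_pow, Nat.add_sub_cancel_left] at h1
    rw [h1, h2, padicValNat.self hp.one_lt]
    omega
  intro h
  have hdvd : p ^ r ∣ (1 + p) ^ φ - 1 := euler_dvd hp hr hwcop
  have hstep : p ^ (r + 1) ∣ (1 + p) ^ φ - 1 := by
    obtain ⟨t, ht⟩ := h
    have hM : (1 + p) ^ φ - 1 = p ^ r * (p * t) := by
      have h2 : (1 + p) ^ φ - 1 = p ^ r * (((1 + p) ^ φ - 1) / p ^ r) :=
        (Nat.mul_div_cancel' hdvd).symm
      rw [h2, show ((1 + p) ^ φ - 1) / p ^ r = p * t from ht]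
    rw [hM, pow_succ]
    exact ⟨t, by ring⟩
  have := pow_succ_padicValNat_not_dvd (p := p) hM0
  rw [hval] at this
  exact this hstep

include hp hr in
lemma levelSet_card_le (hodd : Odd p) {l1 l2 : ℕ} (hl2 : l2 < p ^ r) :
    (levelSet p r l1).card ≤ (levelSet p r l2).card := by
  haveI : Fact p.Prime := ⟨hp⟩
  haveI : NeZero (p ^ r) := ⟨pow_ne_zero _ hp.ne_zero⟩
  set w : ℕ := 1 + p with hw
  set c : ℕ := eq' p r w with hc
  have hwcop : w.Coprime p := by simp [hw, Nat.coprime_add_self_left]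
  have hcnd : ¬ p ∣ c := not_dvd_eq'_w hp hr hodd
  have hccop : c.Coprime (p ^ r) := ((hp.coprime_iff_not_dvd.mpr hcnd).symm).pow_right r
  have hunit : IsUnit (c : ZMod (p ^ r)) := (ZMod.isUnit_iff_coprime c (p ^ r)).mpr hccop
  set k : ℕ := (((c : ZMod (p ^ r)))⁻¹ * ((l2 : ZMod (p ^ r)) - (l1 : ZMod (p ^ r)))).val with hk
  have hkc : l1 + k * c ≡ l2 [MOD p ^ r] := by
    rw [← ZMod.natCast_eq_natCast_iff]
    push_cast
    rw [hk, ZMod.natCast_rightInverse _]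
    have h := ZMod.inv_mul_of_unit _ hunit
    linear_combination ((l2 : ZMod (p ^ r)) - (l1 : ZMod (p ^ r))) * h
  have hN : 0 < p ^ (r + 1) := pow_pos hp.pos _
  apply Finset.card_le_card_of_injOn (fun u => (u * w ^ k) % p ^ (r + 1))
  · intro u hu
    simp only [levelSet, Finset.mem_coe, Finset.mem_filter, Finset.mem_range] at hu ⊢
    obtain ⟨hu1, hu2, hu3⟩ := hu
    have hcop2 : (u * w ^ k).Coprime p := hu2.mul (hwcop.pow_left k)
    have hcop1 : ((u * w ^ k) % p ^ (r + 1)).Coprime p := by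
      rw [Nat.coprime_comm, hp.coprime_iff_not_dvd,
        Nat.dvd_mod_iff (dvd_pow_self p (Nat.succ_ne_zero r))]
      rw [Nat.coprime_comm, hp.coprime_iff_not_dvd] at hcop2
      exact hcop2
    refine ⟨Nat.mod_lt _ hN, hcop1, ?_⟩
    rw [eulerQuotient_eq]
    have e1 : eq' p r ((u * w ^ k) % p ^ (r + 1)) ≡ eq' p r (u * w ^ k) [MOD p ^ r] :=
      eq'_congr hp hr hcop1 hcop2 (Nat.mod_modEq _ _)
    have e2 : eq' p r (u * w ^ k)
        = eq' p r u + eq' p r (w ^ k) + p ^ r * (eq' p r u * eq' p r (w ^ k)) :=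
      eq'_mul hp hr hu2 (hwcop.pow_left k)
    have e3 : eq' p r (w ^ k) ≡ k * c [MOD p ^ r] := eq'_pow hp hr hwcop k
    have e4 : eq' p r u ≡ l1 [MOD p ^ r] := by
      rw [← hu3, eulerQuotient_eq]
      exact (Nat.mod_modEq _ _).symm
    have echain : eq' p r ((u * w ^ k) % p ^ (r + 1)) ≡ l2 [MOD p ^ r] := by
      calc eq' p r ((u * w ^ k) % p ^ (r + 1))
          ≡ eq' p r u + eq' p r (w ^ k) + p ^ r * (eq' p r u * eq' p r (w ^ k)) [MOD p ^ r] :=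
            e2 ▸ e1
        _ ≡ l1 + k * c + 0 [MOD p ^ r] :=
            (e4.add e3).add (Nat.modEq_zero_iff_dvd.mpr (dvd_mul_right _ _))
        _ ≡ l2 [MOD p ^ r] := by rw [Nat.add_zero]; exact hkc
    calc eq' p r ((u * w ^ k) % p ^ (r + 1)) % p ^ r = l2 % p ^ r := echain
      _ = l2 := Nat.mod_eq_of_lt hl2
  · intro u1 h1 u2 h2 hf
    simp only [levelSet, Finset.coe_filter, Set.mem_setOf_eq, Finset.mem_range] at h1 h2
    have hmod : u1 * w ^ k ≡ u2 * w ^ k [MOD p ^ (r + 1)] := hf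
    have hcan : u1 ≡ u2 [MOD p ^ (r + 1)] :=
      Nat.ModEq.cancel_right_of_coprime (by
        have : (w ^ k).Coprime (p ^ (r + 1)) := (hwcop.pow_left k).pow_right (r + 1)
        exact Nat.coprime_comm.mp this) hmod
    have := hcan
    unfold Nat.ModEq at this
    rw [Nat.mod_eq_of_lt h1.1, Nat.mod_eq_of_lt h2.1] at this
    exact this

end aux

theorem levelSet_card (p : ℕ) (hp : p.Prime) (hodd : Odd p)
    (r : ℕ) (hr : 1 ≤ r) (l : ℕ) (hl : l < p ^ r) :
    (levelSet p r l).card = p - 1 := by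
  have hN : 0 < p ^ (r + 1) := pow_pos hp.pos _
  have hn : 0 < p ^ r := pow_pos hp.pos _
  set S : Finset ℕ := (Finset.range (p ^ (r + 1))).filter (fun u => Nat.Coprime u p) with hS
  have hfib : S.card = ∑ l' ∈ Finset.range (p ^ r), (levelSet p r l').card := by
    have h := Finset.card_eq_sum_card_fiberwise
      (f := eulerQuotient p r) (s := S) (t := Finset.range (p ^ r))
      (fun u _ => Finset.mem_range.mpr (Nat.mod_lt _ hn))
    rw [h]
    refine Finset.sum_congr rfl fun l' _ => ?_
    congr 1
    rw [hS, Finset.filter_filter]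
    rfl
  have hScard : S.card = p ^ r * (p - 1) := by
    have h1 : S.card = (p ^ (r + 1)).totient := by
      rw [Nat.totient_eq_card_coprime, hS]
      congr 1
      apply Finset.filter_congr
      intro u _
      constructor
      · intro h
        exact Nat.Coprime.pow_left _ (Nat.coprime_comm.mp h)
      · intro h
        exact Nat.coprime_comm.mp ((Nat.coprime_pow_left_iff (Nat.succ_pos r) _ _).mp h)
    rw [h1, Nat.totient_prime_pow hp (Nat.succ_pos r)]
    simp
  have heq : ∀ l' ∈ Finset.range (p ^ r),
      (levelSet p r l').card = (levelSet p r l).card := fun l' hl' =>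
    le_antisymm (levelSet_card_le hp hr hodd hl)
      (levelSet_card_le hp hr hodd (Finset.mem_range.mp hl'))
  rw [Finset.sum_congr rfl heq, Finset.sum_const, Finset.card_range, smul_eq_mul] at hfib
  have := hScard.symm.trans hfib
  exact (Nat.eq_of_mul_eq_mul_left hn this.symm)
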